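/- Suppose A ∈ ℝ^{n×n} is Hurwitz, exp(tA)B ≥ 0 and C exp(tA) ≥ 0 entrywise for all t ≥ 0, and for every x₀ ≥ 0 there is τ₀ with exp(tA)x₀ ≥ 0 for t ≥ τ₀. Then for every x₀ ≥ 0 and every measurable control u : [0,∞) → ℝ^m with u(t) ≥ 0, the state x(t) = exp(tA)x₀ + ∫₀ᵗ exp((t−s)A)B u(s) ds satisfies x(t) ≥ 0 for all t ≥ τ₀, and the output y(t) = C x(t) satisfies y(t) ≥ 0 for all t ≥ 0, provided additionally C ≥ 0. -/

import Mathlib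

open Matrix MeasureTheory

lemma mulVec_nonneg' {p q : ℕ} (M : Matrix (Fin p) (Fin q) ℝ) (v : Fin q → ℝ)
    (hM : ∀ i j, 0 ≤ M i j) (hv : ∀ j, 0 ≤ v j) (i : Fin p) : 0 ≤ M.mulVec v i := by
  simp only [Matrix.mulVec, dotProduct]
  apply Finset.sum_nonneg
  intro j _
  exact mul_nonneg (hM i j) (hv j)

/-- Sufficiency part of the characterization of internally eventually positive systems:
if `A` is Hurwitz, `exp(tA)B ≥ 0` and `C exp(tA) ≥ 0` for all `t ≥ 0`, `C ≥ 0`, and the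
trajectory `exp(tA)x₀` of the uncontrolled system is nonnegative for `t ≥ τ₀`, then for
any nonnegative control the state is nonnegative for `t ≥ τ₀` and the output is
nonnegative for all `t ≥ 0`. -/
theorem stmt_11 {n m k : ℕ} (A : Matrix (Fin n) (Fin n) ℝ)
    (B : Matrix (Fin n) (Fin m) ℝ) (C : Matrix (Fin k) (Fin n) ℝ)
    (hHurwitz : ∀ μ : ℂ, μ ∈ spectrum ℂ (A.map (algebraMap ℝ ℂ)) → μ.re < 0)
    (hB : ∀ t : ℝ, 0 ≤ t → ∀ i j, 0 ≤ (NormedSpace.exp (t • A) * B) i j)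
    (hC : ∀ t : ℝ, 0 ≤ t → ∀ i j, 0 ≤ (C * NormedSpace.exp (t • A)) i j)
    (hC0 : ∀ i j, 0 ≤ C i j)
    (x₀ : Fin n → ℝ) (hx₀ : ∀ i, 0 ≤ x₀ i)
    (τ₀ : ℝ) (hτ₀ : 0 ≤ τ₀)
    (hev : ∀ t : ℝ, τ₀ ≤ t → ∀ i, 0 ≤ (NormedSpace.exp (t • A)).mulVec x₀ i)
    (u : ℝ → Fin m → ℝ) (hu : ∀ s i, 0 ≤ u s i)
    (hmeas : ∀ (t : ℝ) (i : Fin n), IntervalIntegrable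
      (fun s => ((NormedSpace.exp ((t - s) • A) * B).mulVec (u s)) i)
      MeasureTheory.volume 0 t)
    (x : ℝ → Fin n → ℝ)
    (hx : ∀ (t : ℝ) (i : Fin n), x t i = (NormedSpace.exp (t • A)).mulVec x₀ i +
      ∫ s in (0:ℝ)..t, ((NormedSpace.exp ((t - s) • A) * B).mulVec (u s)) i) :
    (∀ t : ℝ, τ₀ ≤ t → ∀ i, 0 ≤ x t i) ∧
    (∀ t : ℝ, 0 ≤ t → ∀ i, 0 ≤ C.mulVec (x t) i) := by
  have hInt : ∀ (t : ℝ), 0 ≤ t → ∀ (i : Fin n),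
      0 ≤ ∫ s in (0:ℝ)..t, ((NormedSpace.exp ((t - s) • A) * B).mulVec (u s)) i := by
    intro t ht i
    apply intervalIntegral.integral_nonneg ht
    intro s hs
    exact mulVec_nonneg' _ _ (hB (t - s) (by linarith [hs.2])) (hu s) i
  constructor
  · intro t ht i
    rw [hx]
    have h0t : (0:ℝ) ≤ t := le_trans hτ₀ ht
    exact add_nonneg (hev t ht i) (hInt t h0t i)
  · intro t ht i
    have key : C.mulVec (x t) i =
        (C * NormedSpace.exp (t • A)).mulVec x₀ i +
        ∫ s in (0:ℝ)..t, ∑ j, C i j * ((NormedSpace.exp ((t - s) • A) * B).mulVec (u s)) j := by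
      rw [intervalIntegral.integral_finset_sum (fun j _ => (hmeas t j).const_mul (C i j))]
      simp only [intervalIntegral.integral_const_mul]
      rw [← Matrix.mulVec_mulVec]
      simp only [Matrix.mulVec, dotProduct]
      rw [← Finset.sum_add_distrib]
      congr 1
      ext j
      rw [hx t j, mul_add]
      simp only [Matrix.mulVec, dotProduct]
    rw [key]
    apply add_nonneg
    · exact mulVec_nonneg' _ _ (hC t ht) hx₀ i
    · apply intervalIntegral.integral_nonneg ht
      intro s hs
      apply Finset.sum_nonneg
      intro j _
      exact mul_nonneg (hC0 i j)
        (mulVec_nonneg' _ _ (hB (t - s) (by linarith [hs.2])) (hu s) j)
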